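/- Let g : (0,1] → ℝ be nonnegative, non-increasing, square-integrable, h(x) = ∫_x^1 g(u)/u du, and ε ∈ (0,1). Then ∫_ε^1 h(x)² dx ≤ 2 ∫_ε^1 h(y) g(y) dy. -/

import Mathlib

open MeasureTheory Set

theorem lstar_intermediate_step
    (g : ℝ → ℝ) (hmeas : Measurable g)
    (hnn : ∀ x ∈ Set.Ioc (0:ℝ) 1, 0 ≤ g x)
    (hmono : AntitoneOn g (Set.Ioc (0:ℝ) 1))
    (hsq : MeasureTheory.IntegrableOn (fun x => (g x)^2) (Set.Ioc (0:ℝ) 1))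
    (ε : ℝ) (hε : ε ∈ Set.Ioo (0:ℝ) 1) :
    (∫ x in ε..1, (∫ u in x..1, g u / u)^2) ≤
      2 * ∫ y in ε..1, (∫ u in y..1, g u / u) * g y := by
  obtain ⟨hε0, hε1⟩ := hε
  have hεmem : ε ∈ Set.Ioc (0:ℝ) 1 := ⟨hε0, hε1.le⟩
  have hsub : Set.Ioc ε 1 ⊆ Set.Ioc (0:ℝ) 1 := Set.Ioc_subset_Ioc_left hε0.le
  have hgε : 0 ≤ g ε := hnn ε hεmem
  set K : ℝ → ℝ := (Set.Ioc ε 1).indicator (fun u => g u / u) with hKdef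
  have hKmeas : Measurable K := (hmeas.div measurable_id).indicator measurableSet_Ioc
  have hKval : ∀ u ∈ Set.Ioc ε 1, K u = g u / u := fun u hu => Set.indicator_of_mem hu _
  have hKnn : ∀ u, 0 ≤ K u := by
    intro u
    by_cases hu : u ∈ Set.Ioc ε 1
    · rw [hKval u hu]
      exact div_nonneg (hnn u (hsub hu)) ((hε0.trans hu.1).le)
    · rw [hKdef, Set.indicator_of_notMem hu]
  have hKbd : ∀ u, K u ≤ g ε / ε := by
    intro u
    by_cases hu : u ∈ Set.Ioc ε 1
    · rw [hKval u hu]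
      exact div_le_div₀ hgε (hmono hεmem (hsub hu) hu.1.le) hε0 hu.1.le
    · rw [hKdef, Set.indicator_of_notMem hu]
      exact div_nonneg hgε hε0.le
  have hIocfin : volume (Set.Ioc ε (1:ℝ)) ≠ ⊤ := by
    simp [Real.volume_Ioc]
  have hKint : Integrable K := by
    rw [hKdef, integrable_indicator_iff measurableSet_Ioc]
    refine Measure.integrableOn_of_bounded hIocfin
      ((hmeas.div measurable_id).aestronglyMeasurable) (M := g ε / ε) ?_
    filter_upwards [ae_restrict_mem measurableSet_Ioc] with u hu
    rw [Real.norm_eq_abs, abs_of_nonneg (div_nonneg (hnn u (hsub hu)) (hε0.trans hu.1).le)]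
    exact div_le_div₀ hgε (hmono hεmem (hsub hu) hu.1.le) hε0 hu.1.le
  set h : ℝ → ℝ := fun v => ∫ u in Set.Ioc v 1, K u with hhdef
  have hanti : Antitone h := by
    intro v w hvw
    exact setIntegral_mono_set hKint.integrableOn (ae_of_all _ hKnn)
      (HasSubset.Subset.eventuallyLE (Set.Ioc_subset_Ioc_left hvw))
  have hhmeas : Measurable h := hanti.measurable
  have hhnn : ∀ v, 0 ≤ h v := fun v =>
    setIntegral_nonneg measurableSet_Ioc fun u _ => hKnn u
  set C : ℝ := ∫ u, K u with hCdef
  have hhbd : ∀ v, h v ≤ C := fun v => setIntegral_le_integral hKint (ae_of_all _ hKnn)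
  have hC0 : 0 ≤ C := integral_nonneg hKnn
  have hKh_int : IntegrableOn (fun v => K v * h v) (Set.Ioc ε 1) := by
    refine Measure.integrableOn_of_bounded hIocfin
      ((hKmeas.mul hhmeas).aestronglyMeasurable) (M := (g ε / ε) * C) ?_
    refine ae_of_all _ fun v => ?_
    rw [Real.norm_eq_abs, abs_of_nonneg (mul_nonneg (hKnn v) (hhnn v))]
    exact mul_le_mul (hKbd v) (hhbd v) (hhnn v) (div_nonneg hgε hε0.le)
  have hgh_int : IntegrableOn (fun v => h v * g v) (Set.Ioc ε 1) := by
    refine Measure.integrableOn_of_bounded hIocfin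
      ((hhmeas.mul hmeas).aestronglyMeasurable) (M := C * (g ε / ε)) ?_
    filter_upwards [ae_restrict_mem measurableSet_Ioc] with v hv
    rw [Real.norm_eq_abs, abs_of_nonneg (mul_nonneg (hhnn v) (hnn v (hsub hv)))]
    refine mul_le_mul (hhbd v) ?_ (hnn v (hsub hv)) hC0
    calc g v ≤ g ε := hmono hεmem (hsub hv) hv.1.le
      _ ≤ g ε / ε := by
          rw [le_div_iff₀ hε0]
          nlinarith
  have hvKh_int : IntegrableOn (fun v => (v - ε) * (K v * h v)) (Set.Ioc ε 1) := by
    refine Measure.integrableOn_of_bounded hIocfin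
      (((measurable_id.sub measurable_const).mul
        (hKmeas.mul hhmeas)).aestronglyMeasurable) (M := 1 * ((g ε / ε) * C)) ?_
    filter_upwards [ae_restrict_mem measurableSet_Ioc] with v hv
    rw [Real.norm_eq_abs, abs_of_nonneg (mul_nonneg (by linarith [hv.1.le] : (0:ℝ) ≤ v - ε)
      (mul_nonneg (hKnn v) (hhnn v)))]
    refine mul_le_mul (by nlinarith [hv.1.le, hv.2]) ?_
      (mul_nonneg (hKnn v) (hhnn v)) zero_le_one
    exact mul_le_mul (hKbd v) (hhbd v) (hhnn v) (div_nonneg hgε hε0.le)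
  -- Key identity via Fubini on the square
  have key : ∀ x ∈ Set.Ioc ε 1, (h x)^2 = 2 * ∫ v in Set.Ioc x 1, K v * h v := by
    intro x hx
    set μ : Measure ℝ := volume.restrict (Set.Ioc x 1) with hμdef
    have hKμ : Integrable K μ := hKint.restrict
    have hF : Integrable (fun p : ℝ × ℝ => K p.1 * K p.2) (μ.prod μ) := hKμ.mul_prod hKμ
    have hDmeas : MeasurableSet {p : ℝ × ℝ | p.1 < p.2} :=
      measurableSet_lt measurable_fst measurable_snd
    have hD'meas : MeasurableSet {p : ℝ × ℝ | p.2 < p.1} :=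
      measurableSet_lt measurable_snd measurable_fst
    have hdiag : (μ.prod μ) {p : ℝ × ℝ | p.1 = p.2} = 0 := by
      rw [Measure.prod_apply (measurableSet_eq_fun measurable_fst measurable_snd)]
      have hz : ∀ a : ℝ, μ (Prod.mk a ⁻¹' {p : ℝ × ℝ | p.1 = p.2}) = 0 := by
        intro a
        have hpre : Prod.mk a ⁻¹' {p : ℝ × ℝ | p.1 = p.2} = {a} := by
          ext y; simp [eq_comm]
        rw [hpre, hμdef, Measure.restrict_apply (measurableSet_singleton a)]
        exact measure_mono_null Set.inter_subset_left Real.volume_singleton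
      simp [hz]
    have hne : ∀ᵐ p ∂μ.prod μ, p.1 ≠ p.2 := by
      rw [ae_iff]
      simpa [not_not] using hdiag
    have hsplit : (fun p : ℝ × ℝ => K p.1 * K p.2) =ᵐ[μ.prod μ]
        fun p => {q : ℝ × ℝ | q.1 < q.2}.indicator (fun q => K q.1 * K q.2) p
          + {q : ℝ × ℝ | q.2 < q.1}.indicator (fun q => K q.1 * K q.2) p := by
      filter_upwards [hne] with p hp
      rcases lt_or_gt_of_ne hp with h1 | h1
      · rw [Set.indicator_of_mem (show p ∈ {q : ℝ × ℝ | q.1 < q.2} from h1),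
          Set.indicator_of_notMem (show p ∉ {q : ℝ × ℝ | q.2 < q.1} from lt_asymm h1), add_zero]
      · rw [Set.indicator_of_mem (show p ∈ {q : ℝ × ℝ | q.2 < q.1} from h1),
          Set.indicator_of_notMem (show p ∉ {q : ℝ × ℝ | q.1 < q.2} from lt_asymm h1), zero_add]
    have hswap : (∫ p, {q : ℝ × ℝ | q.2 < q.1}.indicator (fun q => K q.1 * K q.2) p ∂μ.prod μ)
        = ∫ p, {q : ℝ × ℝ | q.1 < q.2}.indicator (fun q => K q.1 * K q.2) p ∂μ.prod μ := by
      rw [← integral_prod_swap (fun p => {q : ℝ × ℝ | q.2 < q.1}.indicator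
        (fun q => K q.1 * K q.2) p)]
      refine integral_congr_ae (ae_of_all _ fun p => ?_)
      simp only [Set.indicator, Set.mem_setOf_eq, Prod.fst_swap, Prod.snd_swap]
      split_ifs <;> ring
    have hinner : ∀ᵐ v ∂μ, (∫ u, {q : ℝ × ℝ | q.1 < q.2}.indicator
        (fun q => K q.1 * K q.2) (v, u) ∂μ) = K v * h v := by
      filter_upwards [ae_restrict_mem measurableSet_Ioc] with v hv
      have h1 : (fun u => {q : ℝ × ℝ | q.1 < q.2}.indicator (fun q => K q.1 * K q.2) (v, u))
          = (Set.Ioi v).indicator (fun u => K v * K u) := by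
        funext u
        by_cases hu : v < u
        · rw [Set.indicator_of_mem (show ((v, u) : ℝ × ℝ) ∈ {q : ℝ × ℝ | q.1 < q.2} from hu),
            Set.indicator_of_mem (show u ∈ Set.Ioi v from hu)]
        · rw [Set.indicator_of_notMem (show ((v, u) : ℝ × ℝ) ∉ {q : ℝ × ℝ | q.1 < q.2} from hu),
            Set.indicator_of_notMem (show u ∉ Set.Ioi v from hu)]
      rw [h1, integral_indicator measurableSet_Ioi, hμdef,
        Measure.restrict_restrict measurableSet_Ioi]
      have h2 : Set.Ioi v ∩ Set.Ioc x 1 = Set.Ioc v 1 := by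
        rw [Set.inter_comm, Set.Ioc_inter_Ioi, max_eq_right hv.1.le]
      rw [h2, integral_const_mul]
    calc (h x)^2 = (∫ u, K u ∂μ) * (∫ u, K u ∂μ) := by rw [sq]
      _ = ∫ p, K p.1 * K p.2 ∂μ.prod μ := (integral_prod_mul K K).symm
      _ = 2 * ∫ v in Set.Ioc x 1, K v * h v := by
          rw [integral_congr_ae hsplit,
            integral_add (hF.indicator hDmeas) (hF.indicator hD'meas), hswap,
            integral_prod _ (hF.indicator hDmeas), integral_congr_ae hinner]
          ring
  -- Second Fubini
  set ν : Measure ℝ := volume.restrict (Set.Ioc ε 1) with hνdef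
  haveI : IsFiniteMeasure ν := by
    constructor
    rw [hνdef, Measure.restrict_apply_univ]
    exact lt_top_iff_ne_top.2 hIocfin
  have hswap2 : (∫ x in Set.Ioc ε 1, ∫ v in Set.Ioc x 1, K v * h v)
      = ∫ v in Set.Ioc ε 1, (v - ε) * (K v * h v) := by
    have hKhν : Integrable (fun v => K v * h v) ν := hKh_int
    have hGint : Integrable (fun p : ℝ × ℝ =>
        {q : ℝ × ℝ | q.1 < q.2}.indicator (fun q => K q.2 * h q.2) p) (ν.prod ν) := by
      have h0 : Integrable (fun p : ℝ × ℝ => (1:ℝ) * (K p.2 * h p.2)) (ν.prod ν) :=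
        (integrable_const (1:ℝ)).mul_prod hKhν
      simp only [one_mul] at h0
      exact h0.indicator (measurableSet_lt measurable_fst measurable_snd)
    have hL : (∫ x in Set.Ioc ε 1, ∫ v in Set.Ioc x 1, K v * h v)
        = ∫ x, ∫ v, {q : ℝ × ℝ | q.1 < q.2}.indicator (fun q => K q.2 * h q.2) (x, v) ∂ν ∂ν := by
      refine integral_congr_ae ?_
      filter_upwards [ae_restrict_mem measurableSet_Ioc] with x hx
      have h1 : (fun v => {q : ℝ × ℝ | q.1 < q.2}.indicator (fun q => K q.2 * h q.2) (x, v))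
          = (Set.Ioi x).indicator (fun v => K v * h v) := by
        funext v
        by_cases hv : x < v
        · rw [Set.indicator_of_mem (show ((x, v) : ℝ × ℝ) ∈ {q : ℝ × ℝ | q.1 < q.2} from hv),
            Set.indicator_of_mem (show v ∈ Set.Ioi x from hv)]
        · rw [Set.indicator_of_notMem (show ((x, v) : ℝ × ℝ) ∉ {q : ℝ × ℝ | q.1 < q.2} from hv),
            Set.indicator_of_notMem (show v ∉ Set.Ioi x from hv)]
      rw [h1, integral_indicator measurableSet_Ioi, hνdef,
        Measure.restrict_restrict measurableSet_Ioi]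
      have h2 : Set.Ioi x ∩ Set.Ioc ε 1 = Set.Ioc x 1 := by
        rw [Set.inter_comm, Set.Ioc_inter_Ioi, max_eq_right hx.1.le]
      rw [h2]
    have hR : (∫ v, ∫ x, {q : ℝ × ℝ | q.1 < q.2}.indicator (fun q => K q.2 * h q.2) (x, v) ∂ν ∂ν)
        = ∫ v in Set.Ioc ε 1, (v - ε) * (K v * h v) := by
      refine integral_congr_ae ?_
      filter_upwards [ae_restrict_mem measurableSet_Ioc] with v hv
      have h1 : (fun x => {q : ℝ × ℝ | q.1 < q.2}.indicator (fun q => K q.2 * h q.2) (x, v))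
          = (Set.Iio v).indicator (fun _ => K v * h v) := by
        funext x
        by_cases hx : x < v
        · rw [Set.indicator_of_mem (show ((x, v) : ℝ × ℝ) ∈ {q : ℝ × ℝ | q.1 < q.2} from hx),
            Set.indicator_of_mem (show x ∈ Set.Iio v from hx)]
        · rw [Set.indicator_of_notMem (show ((x, v) : ℝ × ℝ) ∉ {q : ℝ × ℝ | q.1 < q.2} from hx),
            Set.indicator_of_notMem (show x ∉ Set.Iio v from hx)]
      rw [h1, integral_indicator_const _ measurableSet_Iio, hνdef,
        measureReal_def, Measure.restrict_apply measurableSet_Iio]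
      have h2 : Set.Iio v ∩ Set.Ioc ε 1 = Set.Ioo ε v := by
        ext u
        constructor
        · rintro ⟨hu1, hu2, _⟩
          exact ⟨hu2, hu1⟩
        · rintro ⟨hu1, hu2⟩
          exact ⟨hu2, hu1, hu2.le.trans hv.2⟩
      rw [h2, Real.volume_Ioo, ENNReal.toReal_ofReal (by linarith [hv.1.le]), smul_eq_mul]
    rw [hL, integral_integral_swap ?_, hR]
    exact hGint
  -- Final assembly
  rw [intervalIntegral.integral_of_le hε1.le, intervalIntegral.integral_of_le hε1.le]
  have hLrw : ∀ x ∈ Set.Ioc ε 1, (∫ u in x..1, g u / u) = h x := by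
    intro x hx
    rw [hhdef, intervalIntegral.integral_of_le hx.2]
    exact setIntegral_congr_fun measurableSet_Ioc fun u hu =>
      (hKval u ⟨hx.1.trans hu.1, hu.2⟩).symm
  calc (∫ x in Set.Ioc ε 1, (∫ u in x..1, g u / u)^2)
      = ∫ x in Set.Ioc ε 1, 2 * ∫ v in Set.Ioc x 1, K v * h v := by
        refine setIntegral_congr_fun measurableSet_Ioc fun x hx => ?_
        rw [hLrw x hx, key x hx]
    _ = 2 * ∫ x in Set.Ioc ε 1, ∫ v in Set.Ioc x 1, K v * h v := by
        rw [integral_const_mul]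
    _ = 2 * ∫ v in Set.Ioc ε 1, (v - ε) * (K v * h v) := by rw [hswap2]
    _ ≤ 2 * ∫ y in Set.Ioc ε 1, h y * g y := by
        refine mul_le_mul_of_nonneg_left ?_ (by norm_num)
        refine setIntegral_mono_on hvKh_int hgh_int measurableSet_Ioc fun v hv => ?_
        have hv0 : (0:ℝ) < v := hε0.trans hv.1
        have hgv : 0 ≤ g v := hnn v (hsub hv)
        have h2 : (v - ε) * (g v / v) ≤ g v := by
          calc (v - ε) * (g v / v) ≤ v * (g v / v) :=
                mul_le_mul_of_nonneg_right (by linarith) (div_nonneg hgv hv0.le)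
            _ = g v := by rw [mul_comm, div_mul_cancel₀ _ hv0.ne']
        calc (v - ε) * (K v * h v) = ((v - ε) * (g v / v)) * h v := by
              rw [hKval v hv]; ring
          _ ≤ g v * h v := mul_le_mul_of_nonneg_right h2 (hhnn v)
          _ = h v * g v := mul_comm _ _
    _ = 2 * ∫ y in Set.Ioc ε 1, (∫ u in y..1, g u / u) * g y := by
        congr 1
        exact setIntegral_congr_fun measurableSet_Ioc fun y hy => by rw [hLrw y hy]
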